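/- Let T be a tree with a maximum matching M and an M-alternating path v_i v_p v_q v_j of length three (edges v_i v_p and v_q v_j in M), such that the middle edge v_p v_q belongs to some other maximum matching of T. Then the group inverse graph T# contains the 4-cycle (v_i, v_p, v_q, v_j) and hence is not a tree. -/
import Mathlib


open SimpleGraph

/-- `X` is the group inverse of `A`. -/
def IsGroupInverse {n : Type*} [Fintype n] (A X : Matrix n n ℝ) : Prop :=
  A * X * A = A ∧ X * A * X = X ∧ A * X = X * A

/-- A matching of a graph: a set of pairwise non-incident edges. -/
def IsMatching {V : Type*} (G : SimpleGraph V) (M : Finset (Sym2 V)) : Prop :=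
  (↑M : Set (Sym2 V)) ⊆ G.edgeSet ∧
    ∀ e ∈ M, ∀ f ∈ M, e ≠ f → ∀ v : V, ¬(v ∈ e ∧ v ∈ f)

/-- A maximum matching: a matching of maximum cardinality. -/
def IsMaxMatching {V : Type*} (G : SimpleGraph V) (M : Finset (Sym2 V)) : Prop :=
  IsMatching G M ∧ ∀ N : Finset (Sym2 V), IsMatching G N → N.card ≤ M.card

/-- A nonempty list of edges alternately in and out of `M`,
beginning and ending with edges of `M`. -/
def IsAltEdgeList {V : Type*} (M : Set (Sym2 V)) : List (Sym2 V) → Prop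
  | [] => False
  | [e] => e ∈ M
  | e :: f :: rest => e ∈ M ∧ f ∉ M ∧ IsAltEdgeList M rest

/-- A pair of vertices is maximally matchable if they are joined by a path that is
alternating with respect to some maximum matching. -/
def MaxMatchable {V : Type*} (G : SimpleGraph V) (u v : V) : Prop :=
  ∃ (p : G.Walk u v) (M : Finset (Sym2 V)),
    p.IsPath ∧ IsMaxMatching G M ∧ IsAltEdgeList (↑M) p.edges

/-- `G` is a star: some center `c` is adjacent to exactly the other vertices,
and there are no other edges. -/
def IsStar {V : Type*} (G : SimpleGraph V) : Prop :=
  ∃ c : V, ∀ u v : V, G.Adj u v ↔ ((u = c ∧ v ≠ c) ∨ (v = c ∧ u ≠ c))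

/-- The class 𝕋: trees with at least one non-pendant vertex in which every
non-pendant vertex is adjacent to a pendant vertex. -/
def InClassT {V : Type*} [Fintype V] (T : SimpleGraph V) [DecidableRel T.Adj] : Prop :=
  T.IsTree ∧ (∃ v, T.degree v ≠ 1) ∧
    ∀ v, T.degree v ≠ 1 → ∃ u, T.Adj v u ∧ T.degree u = 1

/-- The number of pendant neighbours of `v`. -/
def pendantNbrs {V : Type*} [Fintype V] [DecidableEq V] (T : SimpleGraph V)
    [DecidableRel T.Adj] (v : V) : ℕ :=
  ((T.neighborFinset v).filter fun u => T.degree u = 1).card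

/-- If a tree has a length-three alternating path with respect to a
maximum matching M whose middle (non-matching) edge lies in another maximum matching,
then the group inverse graph contains a 4-cycle and is not a tree. -/
theorem middle_edge_in_other_matching_not_tree {V : Type*} [Fintype V]
    (T : SimpleGraph V) (hT : T.IsTree)
    (M M' : Finset (Sym2 V)) (hM : IsMaxMatching T M) (hM' : IsMaxMatching T M')
    (vi vp vq vj : V) (hdist : [vi, vp, vq, vj].Pairwise (· ≠ ·))
    (h1 : s(vi, vp) ∈ M) (h2 : s(vq, vj) ∈ M)
    (h3 : s(vp, vq) ∈ T.edgeSet) (h4 : s(vp, vq) ∉ M) (h5 : s(vp, vq) ∈ M') :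
    (MaxMatchable T vi vp ∧ MaxMatchable T vp vq ∧
      MaxMatchable T vq vj ∧ MaxMatchable T vj vi) ∧
    ¬ (SimpleGraph.fromRel (MaxMatchable T)).IsTree := by
  have hip2 : vi ≠ vp := List.rel_of_pairwise_cons hdist (by simp)
  have hiq : vi ≠ vq := List.rel_of_pairwise_cons hdist (by simp)
  have hij : vi ≠ vj := List.rel_of_pairwise_cons hdist (by simp)
  have hpq : vp ≠ vq := List.rel_of_pairwise_cons hdist.tail (by simp)
  have hpj : vp ≠ vj := List.rel_of_pairwise_cons hdist.tail (by simp)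
  have hqj : vq ≠ vj := List.rel_of_pairwise_cons hdist.tail.tail (by simp)
  have aip : T.Adj vi vp := T.mem_edgeSet.1 (hM.1.1 h1)
  have apq : T.Adj vp vq := T.mem_edgeSet.1 h3
  have aqj : T.Adj vq vj := T.mem_edgeSet.1 (hM.1.1 h2)
  -- single-edge alternating paths
  have m1 : MaxMatchable T vi vp := by
    exact ⟨Walk.cons aip Walk.nil, M, by simp [Walk.isPath_def, hip2],
      hM, by simpa [IsAltEdgeList] using h1⟩
  have m2 : MaxMatchable T vp vq := by
    exact ⟨Walk.cons apq Walk.nil, M', by simp [Walk.isPath_def, hpq],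
      hM', by simpa [IsAltEdgeList] using h5⟩
  have m3 : MaxMatchable T vq vj := by
    exact ⟨Walk.cons aqj Walk.nil, M, by simp [Walk.isPath_def, hqj],
      hM, by simpa [IsAltEdgeList] using h2⟩
  have m4 : MaxMatchable T vj vi := by
    refine ⟨Walk.cons aqj.symm (Walk.cons apq.symm (Walk.cons aip.symm Walk.nil)), M,
      ?_, hM, ?_⟩
    · simp [Walk.isPath_def, hip2, hiq, hij, hpq, hpj, hqj, hip2.symm, hiq.symm, hij.symm,
        hpq.symm, hpj.symm, hqj.symm]
    · refine ⟨by simpa [Sym2.eq_swap] using h2, by simpa [Sym2.eq_swap] using h4, ?_⟩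
      simpa [IsAltEdgeList, Sym2.eq_swap] using h1
  refine ⟨⟨m1, m2, m3, m4⟩, ?_⟩
  intro htree
  set G := SimpleGraph.fromRel (MaxMatchable T) with hG
  have a1 : G.Adj vi vp := by simp [hG, SimpleGraph.fromRel_adj, hip2, m1]
  have a2 : G.Adj vp vq := by simp [hG, SimpleGraph.fromRel_adj, hpq, m2]
  have a3 : G.Adj vq vj := by simp [hG, SimpleGraph.fromRel_adj, hqj, m3]
  have a4 : G.Adj vj vi := by simp [hG, SimpleGraph.fromRel_adj, hij.symm, m4]
  refine htree.IsAcyclic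
    (Walk.cons a1 (Walk.cons a2 (Walk.cons a3 (Walk.cons a4 Walk.nil)))) ?_
  refine ⟨⟨⟨?_⟩, by simp⟩, ?_⟩
  · simp only [Walk.edges_cons, Walk.edges_nil, List.nodup_cons, List.mem_cons,
      List.not_mem_nil, or_false, List.nodup_nil, and_true]
    refine ⟨?_, ?_, ?_⟩ <;> simp [Sym2.eq_iff] <;> tauto
  · simp only [Walk.support_cons, Walk.support_nil, List.tail_cons, List.nodup_cons,
      List.mem_cons, List.not_mem_nil, or_false, List.nodup_nil, and_true,
      List.mem_singleton]
    tauto
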